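/- Let ρ : ℝ² → [0,∞) be measurable and integrable with ∫_{ℝ²} |x|² ρ(x) dx < ∞. Then ∫_{ℝ²}∫_{ℝ²} max(ln|x−y|, 0) ρ(x) ρ(y) dx dy ≤ 2 ( ∫_{ℝ²} ρ(x) dx )^{3/2} ( ∫_{ℝ²} |x|² ρ(x) dx )^{1/2}. -/

import Mathlib

open MeasureTheory

noncomputable abbrev R2 : Type := EuclideanSpace ℝ (Fin 2)

/-- The positive part of the logarithmic interaction energy of a nonnegative density `ρ`
is controlled by its mass and second moment:
`∫∫ ln₊|x−y| ρ(x) ρ(y) dx dy ≤ 2 (∫ ρ)^{3/2} (∫ |x|² ρ)^{1/2}`. -/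
theorem log_plus_interaction_bound (ρ : R2 → ℝ) (hmeas : Measurable ρ)
    (hpos : ∀ x, 0 ≤ ρ x) (hint : Integrable ρ)
    (hmom : Integrable fun x => ‖x‖ ^ 2 * ρ x) :
    ∫ x, ∫ y, max (Real.log ‖x - y‖) 0 * ρ x * ρ y
      ≤ 2 * (∫ x, ρ x) ^ (3 / 2 : ℝ) * Real.sqrt (∫ x, ‖x‖ ^ 2 * ρ x) := by
  set M := ∫ x, ρ x with hMdef
  set S := ∫ x, ‖x‖ ^ 2 * ρ x with hSdef
  have hM0 : 0 ≤ M := integral_nonneg hpos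
  have hS0 : 0 ≤ S := integral_nonneg fun x => mul_nonneg (sq_nonneg _) (hpos x)
  -- integrability of ‖x‖ * ρ x
  have hnorm_int : Integrable (fun x : R2 => ‖x‖ * ρ x) := by
    refine (hint.add hmom).mono' ((measurable_norm.mul hmeas).aestronglyMeasurable) ?_
    filter_upwards with x
    simp only [Pi.add_apply]
    rw [Real.norm_of_nonneg (mul_nonneg (norm_nonneg _) (hpos x))]
    nlinarith [sq_nonneg (1 - ‖x‖), hpos x, norm_nonneg x,
      mul_nonneg (norm_nonneg x) (hpos x)]
  set A := ∫ x, ‖x‖ * ρ x with hAdef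
  have hA0 : 0 ≤ A := integral_nonneg fun x => mul_nonneg (norm_nonneg _) (hpos x)
  -- Cauchy–Schwarz : A ≤ √M * √S
  have hsqrt_meas : Measurable fun x : R2 => Real.sqrt (ρ x) :=
    Real.continuous_sqrt.measurable.comp hmeas
  have hCS : A ≤ Real.sqrt M * Real.sqrt S := by
    have hpq : Real.HolderConjugate 2 2 := Real.holderConjugate_iff.mpr ⟨by norm_num, by norm_num⟩
    have h2 : ENNReal.ofReal (2 : ℝ) = 2 := by
      rw [ENNReal.ofReal_ofNat]
    have hf2 : MemLp (fun x : R2 => Real.sqrt (ρ x)) (ENNReal.ofReal 2) := by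
      rw [h2, memLp_two_iff_integrable_sq hsqrt_meas.aestronglyMeasurable]
      exact hint.congr (Filter.Eventually.of_forall fun x =>
        (Real.sq_sqrt (hpos x)).symm)
    have hg2 : MemLp (fun x : R2 => ‖x‖ * Real.sqrt (ρ x)) (ENNReal.ofReal 2) := by
      rw [h2, memLp_two_iff_integrable_sq
        (f := fun x : R2 => ‖x‖ * Real.sqrt (ρ x)) (μ := volume)
        ((measurable_norm.mul hsqrt_meas).aestronglyMeasurable)]
      refine hmom.congr (Filter.Eventually.of_forall fun x => ?_)
      dsimp only
      rw [mul_pow, Real.sq_sqrt (hpos x)]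
    have key := integral_mul_le_Lp_mul_Lq_of_nonneg hpq
      (Filter.Eventually.of_forall fun x => Real.sqrt_nonneg (ρ x))
      (Filter.Eventually.of_forall fun x =>
        mul_nonneg (norm_nonneg x) (Real.sqrt_nonneg (ρ x)))
      hf2 hg2
    have e1 : ∫ x : R2, Real.sqrt (ρ x) * (‖x‖ * Real.sqrt (ρ x)) = A := by
      rw [hAdef]
      refine integral_congr_ae (Filter.Eventually.of_forall fun x => ?_)
      dsimp only
      rw [show Real.sqrt (ρ x) * (‖x‖ * Real.sqrt (ρ x))
        = ‖x‖ * (Real.sqrt (ρ x) * Real.sqrt (ρ x)) by ring, Real.mul_self_sqrt (hpos x)]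
    have e2 : ∫ x : R2, Real.sqrt (ρ x) ^ (2 : ℝ) = M := by
      rw [hMdef]
      refine integral_congr_ae (Filter.Eventually.of_forall fun x => ?_)
      dsimp only
      rw [Real.rpow_two, Real.sq_sqrt (hpos x)]
    have e3 : ∫ x : R2, (‖x‖ * Real.sqrt (ρ x)) ^ (2 : ℝ) = S := by
      rw [hSdef]
      refine integral_congr_ae (Filter.Eventually.of_forall fun x => ?_)
      dsimp only
      rw [Real.rpow_two, mul_pow, Real.sq_sqrt (hpos x)]
    rw [e1, e2, e3] at key
    rw [Real.sqrt_eq_rpow, Real.sqrt_eq_rpow]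
    exact key
  -- pointwise bound on the inner integral
  have hIx : ∀ x : R2, (∫ y, max (Real.log ‖x - y‖) 0 * ρ x * ρ y)
      ≤ M * (‖x‖ * ρ x) + A * ρ x := by
    intro x
    have hyint : Integrable (fun y : R2 => (‖x‖ * ρ x) * ρ y + ρ x * (‖y‖ * ρ y)) :=
      (hint.const_mul _).add (hnorm_int.const_mul _)
    have h1 : (∫ y, max (Real.log ‖x - y‖) 0 * ρ x * ρ y)
        ≤ ∫ y, ((‖x‖ * ρ x) * ρ y + ρ x * (‖y‖ * ρ y)) := by
      refine integral_mono_of_nonneg ?_ hyint ?_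
      · filter_upwards with y
        exact mul_nonneg (mul_nonneg (le_max_right _ _) (hpos x)) (hpos y)
      · filter_upwards with y
        have hlog : max (Real.log ‖x - y‖) 0 ≤ ‖x‖ + ‖y‖ := by
          have h1 : ‖x - y‖ ≤ ‖x‖ + ‖y‖ := norm_sub_le x y
          rcases le_or_gt ‖x - y‖ 0 with h | h
          · have : ‖x - y‖ = 0 := le_antisymm h (norm_nonneg _)
            rw [this, Real.log_zero]
            simpa using add_nonneg (norm_nonneg x) (norm_nonneg y)
          · have := Real.log_le_sub_one_of_pos h
            have h0 : (0:ℝ) ≤ ‖x - y‖ := le_of_lt h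
            refine max_le (by linarith) (by positivity)
        calc max (Real.log ‖x - y‖) 0 * ρ x * ρ y
            ≤ (‖x‖ + ‖y‖) * ρ x * ρ y := by
              apply mul_le_mul_of_nonneg_right _ (hpos y)
              exact mul_le_mul_of_nonneg_right hlog (hpos x)
          _ = (‖x‖ * ρ x) * ρ y + ρ x * (‖y‖ * ρ y) := by ring
    have h2 : (∫ y, ((‖x‖ * ρ x) * ρ y + ρ x * (‖y‖ * ρ y)))
        = M * (‖x‖ * ρ x) + A * ρ x := by
      rw [integral_add (hint.const_mul _) (hnorm_int.const_mul _),
        integral_const_mul, integral_const_mul, ← hMdef, ← hAdef]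
      ring
    linarith
  -- outer integral
  have houter : (∫ x, ∫ y, max (Real.log ‖x - y‖) 0 * ρ x * ρ y)
      ≤ ∫ x, (M * (‖x‖ * ρ x) + A * ρ x) := by
    refine integral_mono_of_nonneg ?_ (((hnorm_int.const_mul M)).add (hint.const_mul A)) ?_
    · filter_upwards with x
      exact integral_nonneg fun y =>
        mul_nonneg (mul_nonneg (le_max_right _ _) (hpos x)) (hpos y)
    · filter_upwards with x using hIx x
  have hval : (∫ x, (M * (‖x‖ * ρ x) + A * ρ x)) = 2 * M * A := by
    rw [integral_add ((hnorm_int.const_mul M)) (hint.const_mul A),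
      integral_const_mul, integral_const_mul, ← hMdef, ← hAdef]
    ring
  rw [hval] at houter
  -- conclude
  have hpow : M ^ (3 / 2 : ℝ) = M * Real.sqrt M := by
    rw [show (3 / 2 : ℝ) = 3 * (1 / 2) by norm_num, Real.rpow_mul hM0,
      ← Real.sqrt_eq_rpow, show (3:ℝ) = ((3:ℕ):ℝ) by norm_num, Real.rpow_natCast,
      show M ^ (3:ℕ) = M ^ 2 * M by ring, Real.sqrt_mul (sq_nonneg M),
      Real.sqrt_sq hM0]
  rw [hpow]
  have : 2 * M * A ≤ 2 * M * (Real.sqrt M * Real.sqrt S) := by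
    have h2M : (0:ℝ) ≤ 2 * M := by linarith
    exact mul_le_mul_of_nonneg_left hCS h2M
  calc (∫ x, ∫ y, max (Real.log ‖x - y‖) 0 * ρ x * ρ y)
      ≤ 2 * M * A := houter
    _ ≤ 2 * M * (Real.sqrt M * Real.sqrt S) := this
    _ = 2 * (M * Real.sqrt M) * Real.sqrt S := by ring
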